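/- arXiv:1712.10266 — 5 statements merged into one kernel-verified Lean document; each statement's English description precedes it below -/
import Mathlib

section
/- Fix α > 0 and 0 < β < 1. Let M(D) = q(D) + η with η ∼ Laplace(b), b = α/ln(1/β). Define the post-processed mechanism M'(D) that outputs True if M(D) > c and False otherwise. Then M' satisfies (α', β)-LCC tolerance with α' = (1 − ln 2 / ln(1/β))·α; i.e., P(M'(D) = True | q(D) < c − α') ≤ β and P(M'(D) = False | q(D) > c + α') ≤ β. Moreover α' < α. -/
open MeasureTheory

/-- The Laplace distribution with scale `b`. -/
noncomputable def laplace (b : ℝ) : Measure ℝ :=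
  volume.withDensity fun z => ENNReal.ofReal ((1 / (2 * b)) * Real.exp (-|z| / b))

open Set Real

lemma laplace_Ioi {b t : ℝ} (hb : 0 < b) (ht : 0 ≤ t) :
    laplace b (Set.Ioi t) = ENNReal.ofReal (1 / 2 * Real.exp (-t / b)) := by
  have hbne : b ≠ 0 := hb.ne'
  have heq : Set.EqOn (fun z : ℝ => (1 / (2 * b)) * Real.exp (-|z| / b))
      (fun z : ℝ => (1 / (2 * b)) * Real.exp (-(z * b⁻¹))) (Set.Ioi t) := by
    intro z hz
    have hz0 : 0 ≤ z := le_trans ht (le_of_lt hz)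
    simp [abs_of_nonneg hz0, neg_div, div_eq_mul_inv]
  have hint : IntegrableOn (fun z : ℝ => (1 / (2 * b)) * Real.exp (-(z * b⁻¹))) (Set.Ioi t) := by
    have := (exp_neg_integrableOn_Ioi t (inv_pos.mpr hb))
    show Integrable (fun z : ℝ => (1 / (2 * b)) * Real.exp (-(z * b⁻¹))) (volume.restrict (Set.Ioi t))
    simpa [mul_comm] using this.const_mul (1 / (2 * b))
  have hint' : IntegrableOn (fun z : ℝ => (1 / (2 * b)) * Real.exp (-|z| / b)) (Set.Ioi t) :=
    hint.congr_fun heq.symm measurableSet_Ioi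
  rw [laplace, withDensity_apply _ measurableSet_Ioi]
  rw [← ofReal_integral_eq_lintegral_ofReal hint']
  · congr 1
    rw [setIntegral_congr_fun measurableSet_Ioi heq]
    rw [integral_const_mul]
    have := integral_comp_mul_right_Ioi (fun x => Real.exp (-x)) t (inv_pos.mpr hb)
    rw [this, integral_exp_neg_Ioi]
    rw [smul_eq_mul]
    rw [show t * b⁻¹ = t / b by rw [div_eq_mul_inv]]
    field_simp
  · filter_upwards with z
    positivity

lemma laplace_Iic_neg {b t : ℝ} (hb : 0 < b) (ht : 0 ≤ t) :
    laplace b (Set.Iic (-t)) = ENNReal.ofReal (1 / 2 * Real.exp (-t / b)) := by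
  have A : MeasurableEmbedding fun x : ℝ => -x :=
    (Homeomorph.neg ℝ).isClosedEmbedding.measurableEmbedding
  have hmeas : Measurable fun z : ℝ => ENNReal.ofReal ((1 / (2 * b)) * Real.exp (-|z| / b)) := by
    fun_prop
  have key : laplace b (Set.Iic (-t)) = laplace b (Set.Ici t) := by
    rw [laplace, withDensity_apply _ measurableSet_Iic, withDensity_apply _ measurableSet_Ici]
    have := setLIntegral_map (μ := volume) (s := Set.Iic (-t)) measurableSet_Iic
      (f := fun z : ℝ => ENNReal.ofReal ((1 / (2 * b)) * Real.exp (-|z| / b)))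
      (g := fun x : ℝ => -x) hmeas measurable_neg
    rw [Measure.map_neg_eq_self (volume : Measure ℝ)] at this
    rw [this]
    have hpre : (fun x : ℝ => -x) ⁻¹' Set.Iic (-t) = Set.Ici t := by
      ext x; simp
    rw [hpre]
    simp only [abs_neg]
  rw [key]
  have hae : Set.Ici t =ᵐ[laplace b] Set.Ioi t := by
    have h1 : Set.Ioi t =ᵐ[volume] Set.Ici t := Ioi_ae_eq_Ici
    exact ((withDensity_absolutelyContinuous volume _).ae_le h1.symm : _)
  rw [measure_congr hae, laplace_Ioi hb ht]

/-- Thresholding the output of the Laplace mechanism with scale `α / ln(1/β)`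
answers the comparison query with `(α', β)`-LCC tolerance, where
`α' = (1 − ln 2 / ln(1/β)) · α < α`. -/
theorem postprocessed_laplace_lcc_tolerance {D : Type} (q : D → ℝ) (c α β : ℝ)
    (hα : 0 < α) (hβ0 : 0 < β) (hβ : β < 1 / 2) :
    (∀ d : D,
      (q d < c - (1 - Real.log 2 / Real.log (1 / β)) * α →
        laplace (α / Real.log (1 / β)) {z : ℝ | c < q d + z} ≤ ENNReal.ofReal β) ∧
      (c + (1 - Real.log 2 / Real.log (1 / β)) * α < q d →
        laplace (α / Real.log (1 / β)) {z : ℝ | ¬ c < q d + z} ≤ ENNReal.ofReal β)) ∧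
    (1 - Real.log 2 / Real.log (1 / β)) * α < α := by
  set L := Real.log (1 / β) with hLdef
  have h2inv : (2 : ℝ) < 1 / β := by rw [lt_div_iff₀ hβ0]; linarith
  have hlog2 : (0 : ℝ) < Real.log 2 := Real.log_pos (by norm_num)
  have h2L : Real.log 2 < L := Real.log_lt_log (by norm_num) h2inv
  have hL : 0 < L := hlog2.trans h2L
  set b := α / L with hbdef
  have hb : 0 < b := div_pos hα hL
  set α' := (1 - Real.log 2 / L) * α with hα'def
  have hfrac : Real.log 2 / L < 1 := (div_lt_one hL).mpr h2L
  have hα' : 0 < α' := mul_pos (by linarith) hα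
  have hexpL : Real.exp (-L) = β := by
    rw [hLdef, Real.exp_neg, Real.exp_log (by positivity), one_div, inv_inv]
  have hkey : α' / b = L - Real.log 2 := by
    rw [hα'def, hbdef]
    field_simp
  have hbound : ∀ t : ℝ, α' ≤ t → (1 / 2 : ℝ) * Real.exp (-t / b) ≤ β := by
    intro t ht
    have h1 : Real.exp (-t / b) ≤ Real.exp (-α' / b) := by
      apply Real.exp_le_exp.mpr
      exact (div_le_div_iff_of_pos_right hb).mpr (by linarith)
    have h2 : Real.exp (-α' / b) = 2 * β := by
      rw [neg_div, hkey, neg_sub, Real.exp_sub, Real.exp_log (by norm_num : (0:ℝ) < 2),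
        ← hexpL, Real.exp_neg, div_eq_mul_inv]
    calc (1 / 2 : ℝ) * Real.exp (-t / b) ≤ 1 / 2 * (2 * β) := by
          rw [h2] at h1; linarith [h1]
      _ = β := by ring
  refine ⟨fun d => ⟨fun hd => ?_, fun hd => ?_⟩, ?_⟩
  · have hset : {z : ℝ | c < q d + z} = Set.Ioi (c - q d) := by
      ext z; simp only [Set.mem_setOf_eq, Set.mem_Ioi]; constructor <;> intro <;> linarith
    have ht : (0 : ℝ) ≤ c - q d := by linarith
    rw [hset, laplace_Ioi hb ht]
    exact ENNReal.ofReal_le_ofReal (hbound _ (by linarith))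
  · have hset : {z : ℝ | ¬ c < q d + z} = Set.Iic (-(q d - c)) := by
      ext z; simp only [Set.mem_setOf_eq, Set.mem_Iic, not_lt]; constructor <;> intro <;> linarith
    have ht : (0 : ℝ) ≤ q d - c := by linarith
    rw [hset, laplace_Iic_neg hb ht]
    exact ENNReal.ofReal_le_ofReal (hbound _ (by linarith))
  · have : 0 < Real.log 2 / L := div_pos hlog2 hL
    nlinarith
end

section
/- Let x_1,…,x_L be real numbers, let η_1,…,η_L be i.i.d. Laplace(b) noise, and let c_k be the k-th largest value among x_1,…,x_L. Let a be the set of k indices with the largest noisy values x_i + η_i. If b ≤ α/(2(ln L + ln(k/β))), then for any fixed index i with x_i < c_k − α, the probability that i ∈ a is at most β/k. -/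
open MeasureTheory

lemma laplace_Ici {b : ℝ} (hb : 0 < b) {t : ℝ} (ht : 0 ≤ t) :
    laplace b (Set.Ici t) = ENNReal.ofReal (Real.exp (-t / b) / 2) := by
  rw [laplace, withDensity_apply _ measurableSet_Ici,
    ← MeasureTheory.restrict_Ioi_eq_restrict_Ici]
  have hcong : ∀ z ∈ Set.Ioi t,
      ENNReal.ofReal ((1 / (2 * b)) * Real.exp (-|z| / b))
        = ENNReal.ofReal ((1 / (2 * b)) * Real.exp (-z / b)) := by
    intro z hz
    rw [abs_of_nonneg (le_of_lt (lt_of_le_of_lt ht hz))]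
  rw [setLIntegral_congr_fun measurableSet_Ioi (fun z hz => hcong z hz)]
  have hIntExp : IntegrableOn (fun z : ℝ => Real.exp (-z / b)) (Set.Ioi t) := by
    have := exp_neg_integrableOn_Ioi t (show (0:ℝ) < 1 / b by positivity)
    refine this.congr_fun (fun z _ => ?_) measurableSet_Ioi
    ring_nf
  have hInt : IntegrableOn (fun z : ℝ => (1 / (2 * b)) * Real.exp (-z / b)) (Set.Ioi t) :=
    hIntExp.const_mul _
  rw [← ofReal_integral_eq_lintegral_ofReal hInt
    (Filter.Eventually.of_forall fun z => by positivity)]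
  congr 1
  have hexp : ∫ z in Set.Ioi t, Real.exp (-z / b) = b * Real.exp (-t / b) := by
    have hd : ∀ z ∈ Set.Ici t, HasDerivAt (fun z : ℝ => -b * Real.exp (-z / b))
        (Real.exp (-z / b)) z := by
      intro z _
      have h1 : HasDerivAt (fun z : ℝ => -z / b) (-1 / b) z := by
        simpa using ((hasDerivAt_id z).neg.div_const b)
      have h2 := (h1.exp).const_mul (-b)
      rwa [mul_comm (Real.exp _) (-1 / b), ← mul_assoc, show -b * (-1 / b) = 1 by have := hb.ne'; field_simp, one_mul] at h2
    have htend : Filter.Tendsto (fun z : ℝ => -b * Real.exp (-z / b)) Filter.atTop (nhds 0) := by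
      have h1 : Filter.Tendsto (fun z : ℝ => -z / b) Filter.atTop Filter.atBot := by
        apply Filter.Tendsto.atBot_div_const hb
        exact Filter.tendsto_neg_atTop_atBot
      have h2 := (Real.tendsto_exp_atBot.comp h1).const_mul (-b)
      simpa using h2
    have := integral_Ioi_of_hasDerivAt_of_tendsto' hd hIntExp htend
    rw [this]; ring
  rw [MeasureTheory.integral_const_mul, hexp]
  field_simp

lemma laplace_Iic_neg_s6 {b : ℝ} (t : ℝ) :
    laplace b (Set.Iic (-t)) = laplace b (Set.Ici t) := by
  rw [laplace, withDensity_apply _ measurableSet_Iic, withDensity_apply _ measurableSet_Ici]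
  have hmap : Measure.map Neg.neg (volume : Measure ℝ) = volume :=
    (Measure.measurePreserving_neg _).map_eq
  conv_lhs => rw [← hmap]
  rw [setLIntegral_map measurableSet_Iic
    (by fun_prop) measurable_neg]
  have hpre : (Neg.neg ⁻¹' Set.Iic (-t) : Set ℝ) = Set.Ici t := by
    ext z; simp
  rw [hpre]
  refine setLIntegral_congr_fun measurableSet_Ici (fun z _ => ?_)
  simp only [abs_neg]

instance laplace_prob {b : ℝ} [Fact (0 < b)] : IsProbabilityMeasure (laplace b) := by
  have hb : 0 < b := Fact.out
  constructor
  have h1 : laplace b (Set.Ici (0:ℝ)) = ENNReal.ofReal (1/2) := by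
    rw [laplace_Ici hb le_rfl]; norm_num
  have h2 : laplace b (Set.Iic (0:ℝ)) = ENNReal.ofReal (1/2) := by
    have := laplace_Iic_neg_s6 (b := b) 0
    rw [neg_zero] at this
    rw [this, h1]
  have h0 : laplace b ({0} : Set ℝ) = 0 := by
    have : (volume : Measure ℝ) ({0} : Set ℝ) = 0 := measure_singleton 0
    exact measure_mono_null (le_refl _) ((withDensity_absolutelyContinuous _ _) this)
  have huniv : (Set.univ : Set ℝ) = Set.Iic 0 ∪ Set.Ici 0 := by
    ext z; simp [le_total]
  have hinter : (Set.Iic (0:ℝ)) ∩ Set.Ici 0 = {0} := by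
    ext z; simp [le_antisymm_iff, and_comm]
  have := measure_union_add_inter (μ := laplace b) (Set.Iic (0:ℝ)) measurableSet_Ici (t := Set.Ici 0)
  rw [hinter, h0, add_zero, h1, h2, ← huniv] at this
  rw [this, ← ENNReal.ofReal_add (by norm_num) (by norm_num)]
  norm_num

lemma pi_eval_eq {L : ℕ} (μ : Measure ℝ) [IsProbabilityMeasure μ] (i : Fin L)
    (s : Set ℝ) (hs : MeasurableSet s) :
    Measure.pi (fun _ : Fin L => μ) (Function.eval i ⁻¹' s) = μ s := by
  rw [Set.eval_preimage, Measure.pi_pi]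
  have h : ∀ j : Fin L, μ (Function.update (fun _ : Fin L => Set.univ) i s j)
      = if j = i then μ s else 1 := by
    intro j
    by_cases hji : j = i
    · subst hji; simp
    · simp [Function.update_of_ne hji, hji]
  rw [Finset.prod_congr rfl (fun j _ => h j), Finset.prod_ite_eq' Finset.univ i (fun _ => μ s)]
  simp

/-- In noisy top-k selection with i.i.d. Laplace(b) noise,
`b ≤ α / (2(ln L + ln(k/β)))`, a fixed index whose true count is below
`c_k − α` is selected with probability at most `β/k`. -/
theorem noisy_topk_small_count_selected (L k : ℕ) (hk : 1 ≤ k) (hkL : k ≤ L)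
    (x : Fin L → ℝ) (α β b : ℝ) (hα : 0 < α) (hβ0 : 0 < β) (hβ1 : β < 1)
    (hb : 0 < b) (hble : b ≤ α / (2 * (Real.log L + Real.log (k / β))))
    (ck : ℝ)
    (hck1 : k ≤ (Finset.univ.filter fun i => ck ≤ x i).card)
    (hck2 : L - k + 1 ≤ (Finset.univ.filter fun i => x i ≤ ck).card)
    (sel : (Fin L → ℝ) → Finset (Fin L))
    (hselcard : ∀ y, (sel y).card = k)
    (hseltop : ∀ y, ∀ i ∈ sel y, ∀ j, j ∉ sel y → y j ≤ y i)
    (i : Fin L) (hi : x i < ck - α) :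
    (Measure.pi fun _ : Fin L => laplace b)
        {ω | i ∈ sel fun j => x j + ω j} ≤ ENNReal.ofReal (β / k) := by
  haveI : Fact (0 < b) := ⟨hb⟩
  haveI : IsProbabilityMeasure (laplace b) := laplace_prob
  have hL1 : 1 ≤ L := le_trans hk hkL
  -- Step 1: event inclusion
  have hsub : {ω : Fin L → ℝ | i ∈ sel fun j => x j + ω j} ⊆
      (Function.eval i ⁻¹' Set.Ici (α / 2)) ∪
        ⋃ j : Fin L, Function.eval j ⁻¹' Set.Iic (-(α / 2)) := by
    intro ω hω
    simp only [Set.mem_setOf_eq] at hω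
    set y : Fin L → ℝ := fun j => x j + ω j with hy
    -- find j with ck ≤ x j and j ∉ sel y
    have hT : ∃ j, ck ≤ x j ∧ j ∉ sel y := by
      by_contra hcon
      push_neg at hcon
      have hsubT : (Finset.univ.filter fun j => ck ≤ x j) ⊆ (sel y).erase i := by
        intro j hj
        rw [Finset.mem_filter] at hj
        refine Finset.mem_erase.2 ⟨?_, hcon j hj.2⟩
        rintro rfl
        have := hj.2
        linarith
      have hcard := Finset.card_le_card hsubT
      rw [Finset.card_erase_of_mem hω, hselcard] at hcard
      omega
    obtain ⟨j, hj1, hj2⟩ := hT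
    have hle : y j ≤ y i := hseltop y i hω j hj2
    have hgap : α < ω i - ω j := by
      simp only [hy] at hle
      linarith
    by_cases hcase : α / 2 ≤ ω i
    · exact Or.inl hcase
    · right
      refine Set.mem_iUnion.2 ⟨j, ?_⟩
      simp only [Set.mem_preimage, Function.eval, Set.mem_Iic]
      push_neg at hcase
      linarith
  -- Step 2: union bound
  have htail : laplace b (Set.Ici (α / 2)) = ENNReal.ofReal (Real.exp (-(α/2) / b) / 2) :=
    laplace_Ici hb (by positivity)
  have htail2 : laplace b (Set.Iic (-(α / 2))) = ENNReal.ofReal (Real.exp (-(α/2) / b) / 2) := by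
    rw [laplace_Iic_neg_s6, htail]
  set q : ℝ := Real.exp (-(α/2) / b) / 2 with hq
  have hbound : (Measure.pi fun _ : Fin L => laplace b)
      {ω | i ∈ sel fun j => x j + ω j} ≤ ENNReal.ofReal q + L * ENNReal.ofReal q := by
    refine le_trans (measure_mono hsub) (le_trans (measure_union_le _ _) ?_)
    gcongr
    · rw [pi_eval_eq _ i _ measurableSet_Ici, htail]
    · refine le_trans (measure_iUnion_fintype_le _ _) ?_
      have : ∀ j : Fin L, (Measure.pi fun _ : Fin L => laplace b)
          (Function.eval j ⁻¹' Set.Iic (-(α / 2))) = ENNReal.ofReal q := by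
        intro j
        rw [pi_eval_eq _ j _ measurableSet_Iic, htail2]
      rw [Finset.sum_congr rfl (fun j _ => this j)]
      simp [Finset.card_univ]
  refine le_trans hbound ?_
  -- Step 3: arithmetic
  have hq0 : 0 ≤ q := by positivity
  have hsum : ENNReal.ofReal q + (L : ENNReal) * ENNReal.ofReal q
      = ENNReal.ofReal ((1 + (L:ℝ)) * q) := by
    have hL : (L : ENNReal) = ENNReal.ofReal (L:ℝ) := by simp
    rw [hL, ← ENNReal.ofReal_mul (by positivity),
      ← ENNReal.ofReal_add hq0 (by positivity)]
    congr 1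
    ring
  rw [hsum]
  apply ENNReal.ofReal_le_ofReal
  -- key: exp(-(α/2)/b) ≤ β/(L*k)
  have hkpos : (0:ℝ) < k := by exact_mod_cast hk
  have hLpos : (0:ℝ) < L := by exact_mod_cast hL1
  have hS : Real.log L + Real.log (k / β) = Real.log (L * (k / β)) := by
    rw [Real.log_mul (by positivity) (by positivity)]
  have hSpos : 0 < Real.log (L * (k / β)) := by
    apply Real.log_pos
    have h1 : (1:ℝ) ≤ L := by exact_mod_cast hL1
    have h2 : (1:ℝ) < k / β := by
      rw [lt_div_iff₀ hβ0]
      have : (1:ℝ) ≤ k := by exact_mod_cast hk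
      nlinarith
    nlinarith
  have hble' : Real.log (L * (k / β)) ≤ α / (2 * b) := by
    rw [hS] at hble
    rw [le_div_iff₀ (by positivity)] at hble ⊢
    calc Real.log (L * (k / β)) * (2 * b) = b * (2 * Real.log (L * (k / β))) := by ring
    _ ≤ α := by linarith [hble]
  have hexp : Real.exp (-(α/2) / b) ≤ β / (L * k) := by
    have h1 : Real.exp (-(α/2)/b) ≤ Real.exp (-(Real.log (L * (k / β)))) := by
      apply Real.exp_le_exp.2
      have : -(α/2)/b = -(α / (2*b)) := by field_simp
      rw [this]
      linarith
    refine le_trans h1 ?_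
    rw [Real.exp_neg, Real.exp_log (by positivity)]
    have hrw : ((L:ℝ) * ((k:ℝ) / β))⁻¹ = β / ((L:ℝ) * k) := by
      field_simp
    rw [hrw]
  have hfinal : (1 + (L:ℝ)) * q ≤ β / k := by
    rw [hq]
    have h2L : (1:ℝ) + L ≤ 2 * L := by
      have : (1:ℝ) ≤ L := by exact_mod_cast hL1
      linarith
    calc (1 + (L:ℝ)) * (Real.exp (-(α/2)/b) / 2) ≤ (2 * L) * ((β / (L * k)) / 2) := by
          apply mul_le_mul h2L (by linarith [hexp]) (by positivity) (by positivity)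
      _ = β / k := by field_simp
  exact hfinal
end

section
/- The Rényi divergence of order 1 (KL divergence) between Laplace(b) centered at 0 and Laplace(b) centered at 1 equals 1/b + exp(−1/b) − 1, for b > 0. -/
open MeasureTheory Set Filter Real

/-- Reflection of integrability through `x ↦ -x`. -/
lemma integrableOn_Iic_comp_neg_aux {f : ℝ → ℝ} {c : ℝ}
    (h : IntegrableOn f (Ici (-c))) :
    IntegrableOn (fun x => f (-x)) (Iic c) := by
  have h_map : ((volume : Measure ℝ).restrict (Ici (-c))).map Neg.neg
      = (volume : Measure ℝ).restrict (Iic c) := by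
    conv => rhs; rw [← Measure.map_neg_eq_self (volume : Measure ℝ),
      measurableEmbedding_neg.restrict_map]
    simp
  rw [IntegrableOn, ← h_map, measurableEmbedding_neg.integrable_map_iff]
  exact h.congr_fun (fun x _ => by simp [Function.comp]) measurableSet_Ici

/-- The KL divergence (Rényi divergence of order 1) between `Laplace(b)`
centered at 0 and `Laplace(b)` centered at 1 equals `1/b + e^{−1/b} − 1`. -/
theorem kl_divergence_laplace_shift (b : ℝ) (hb : 0 < b) :
    (∫ x : ℝ, ((1 / (2 * b)) * Real.exp (-|x| / b)) *
        Real.log (((1 / (2 * b)) * Real.exp (-|x| / b)) /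
          ((1 / (2 * b)) * Real.exp (-|x - 1| / b)))) =
      1 / b + Real.exp (-1 / b) - 1 := by
  have hb0 : b ≠ 0 := hb.ne'
  have hbinv : 0 < 1 / b := by positivity
  set f : ℝ → ℝ := fun x => Real.exp (-|x| / b) * (|x - 1| - |x|) with hf
  -- pointwise rewriting of the integrand
  have hpt : ∀ x : ℝ, ((1 / (2 * b)) * Real.exp (-|x| / b)) *
      Real.log (((1 / (2 * b)) * Real.exp (-|x| / b)) /
        ((1 / (2 * b)) * Real.exp (-|x - 1| / b))) = (1 / (2 * b * b)) * f x := by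
    intro x
    have h2b : (1 : ℝ) / (2 * b) ≠ 0 := by positivity
    rw [mul_div_mul_left _ _ h2b, ← Real.exp_sub, Real.log_exp, hf]
    field_simp
    ring
  simp only [hpt]
  rw [integral_const_mul]
  -- integrability pieces
  have hcont : Continuous f := by
    exact (Real.continuous_exp.comp ((continuous_abs.neg).div_const b)).mul
      (((continuous_abs.comp (continuous_id.sub continuous_const))).sub continuous_abs)
  have hint_left : IntegrableOn f (Iic (0 : ℝ)) := by
    have h1 : IntegrableOn (fun x : ℝ => Real.exp (-(1 / b) * x)) (Ici (-(0 : ℝ))) := by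
      rw [integrableOn_Ici_iff_integrableOn_Ioi]
      exact exp_neg_integrableOn_Ioi _ hbinv
    have h2 := integrableOn_Iic_comp_neg_aux h1
    refine h2.congr_fun (fun x hx => ?_) measurableSet_Iic
    simp only [Iic, mem_setOf_eq] at hx
    have hx1 : |x| = -x := abs_of_nonpos hx
    have hx2 : |x - 1| = -(x - 1) := abs_of_nonpos (by linarith)
    simp only [hf, hx1, hx2]
    rw [show -(-x) / b = -(1 / b) * -x by ring]
    ring
  have hint_mid : IntegrableOn f (Ioc (0 : ℝ) 1) := hcont.integrableOn_Ioc
  have hint_right : IntegrableOn f (Ioi (1 : ℝ)) := by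
    have h1 : IntegrableOn (fun x : ℝ => -Real.exp (-(1 / b) * x)) (Ioi (1 : ℝ)) :=
      (exp_neg_integrableOn_Ioi _ hbinv).neg
    refine h1.congr_fun (fun x hx => ?_) measurableSet_Ioi
    simp only [Ioi, mem_setOf_eq] at hx
    have hx1 : |x| = x := abs_of_nonneg (by linarith)
    have hx2 : |x - 1| = x - 1 := abs_of_nonneg (by linarith)
    simp only [hf, hx1, hx2]
    rw [show -x / b = -(1 / b) * x by ring]
    ring
  have hint_Ioi : IntegrableOn f (Ioi (0 : ℝ)) := by
    rw [← Ioc_union_Ioi_eq_Ioi (zero_le_one : (0 : ℝ) ≤ 1), integrableOn_union]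
    exact ⟨hint_mid, hint_right⟩
  -- value on the left piece
  have hleft : ∫ x in Iic (0 : ℝ), f x = b := by
    have heq : ∫ x in Iic (0 : ℝ), f x = ∫ x in Iic (0 : ℝ), Real.exp (x / b) := by
      refine setIntegral_congr_fun measurableSet_Iic (fun x hx => ?_)
      simp only [Iic, mem_setOf_eq] at hx
      have hx1 : |x| = -x := abs_of_nonpos hx
      have hx2 : |x - 1| = -(x - 1) := abs_of_nonpos (by linarith)
      simp only [hf, hx1, hx2, neg_neg]
      ring
    rw [heq]
    have hderiv : ∀ x ∈ Iic (0 : ℝ),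
        HasDerivAt (fun x : ℝ => b * Real.exp (x / b)) (Real.exp (x / b)) x := by
      intro x _
      have := (((hasDerivAt_id x).div_const b).exp).const_mul b
      refine this.congr_deriv ?_
      simp only [id]
      field_simp
    have htend : Tendsto (fun x : ℝ => b * Real.exp (x / b)) atBot (nhds (b * 0)) := by
      refine Tendsto.const_mul b ?_
      exact Real.tendsto_exp_atBot.comp (Tendsto.atBot_div_const hb tendsto_id)
    have hintd : IntegrableOn (fun x : ℝ => Real.exp (x / b)) (Iic (0 : ℝ)) := by
      refine hint_left.congr_fun (fun x hx => ?_) measurableSet_Iic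
      simp only [Iic, mem_setOf_eq] at hx
      have hx1 : |x| = -x := abs_of_nonpos hx
      have hx2 : |x - 1| = -(x - 1) := abs_of_nonpos (by linarith)
      simp only [hf, hx1, hx2, neg_neg]
      ring
    rw [MeasureTheory.integral_Iic_of_hasDerivAt_of_tendsto' hderiv hintd htend]
    simp
  -- value on the right piece
  have hright : ∫ x in Ioi (1 : ℝ), f x = -(b * Real.exp (-1 / b)) := by
    have heq : ∫ x in Ioi (1 : ℝ), f x = ∫ x in Ioi (1 : ℝ), -Real.exp (-x / b) := by
      refine setIntegral_congr_fun measurableSet_Ioi (fun x hx => ?_)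
      simp only [Ioi, mem_setOf_eq] at hx
      have hx1 : |x| = x := abs_of_nonneg (by linarith)
      have hx2 : |x - 1| = x - 1 := abs_of_nonneg (by linarith)
      simp only [hf, hx1, hx2]
      ring
    rw [heq]
    have hderiv : ∀ x ∈ Ici (1 : ℝ),
        HasDerivAt (fun x : ℝ => b * Real.exp (-x / b)) (-Real.exp (-x / b)) x := by
      intro x _
      have := ((((hasDerivAt_id x).neg).div_const b).exp).const_mul b
      refine this.congr_deriv ?_
      simp only [Pi.neg_apply, id]
      field_simp
    have htend : Tendsto (fun x : ℝ => b * Real.exp (-x / b)) atTop (nhds (b * 0)) := by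
      refine Tendsto.const_mul b ?_
      refine Real.tendsto_exp_atBot.comp ?_
      exact Tendsto.atBot_div_const hb (tendsto_neg_atBot_iff.mpr tendsto_id)
    have hintd : IntegrableOn (fun x : ℝ => -Real.exp (-x / b)) (Ioi (1 : ℝ)) := by
      have h1 : IntegrableOn (fun x : ℝ => -Real.exp (-(1 / b) * x)) (Ioi (1 : ℝ)) :=
        (exp_neg_integrableOn_Ioi _ hbinv).neg
      refine h1.congr_fun (fun x _ => ?_) measurableSet_Ioi
      beta_reduce
      rw [show -(1 / b) * x = -x / b by ring]
    rw [MeasureTheory.integral_Ioi_of_hasDerivAt_of_tendsto' hderiv hintd htend]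
    ring
  -- value on the middle piece
  have hmid : ∫ x in Ioc (0 : ℝ) 1, f x
      = Real.exp (-1 / b) * (b + 2 * b ^ 2) - 2 * b ^ 2 + b := by
    have heq : ∫ x in Ioc (0 : ℝ) 1, f x
        = ∫ x in Ioc (0 : ℝ) 1, Real.exp (-x / b) * (1 - 2 * x) := by
      refine setIntegral_congr_fun measurableSet_Ioc (fun x hx => ?_)
      obtain ⟨hx0, hx1⟩ := hx
      have h1 : |x| = x := abs_of_nonneg hx0.le
      have h2 : |x - 1| = -(x - 1) := abs_of_nonpos (by linarith)
      simp only [hf, h1, h2]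
      ring
    rw [heq, ← intervalIntegral.integral_of_le (zero_le_one : (0 : ℝ) ≤ 1)]
    have hderiv : ∀ x ∈ Set.uIcc (0 : ℝ) 1,
        HasDerivAt (fun x : ℝ => Real.exp (-x / b) * (2 * b * x + 2 * b ^ 2 - b))
          (Real.exp (-x / b) * (1 - 2 * x)) x := by
      intro x _
      have h1 : HasDerivAt (fun x : ℝ => Real.exp (-x / b)) (Real.exp (-x / b) * (-1 / b)) x := by
        simpa using (((hasDerivAt_id x).neg).div_const b).exp
      have h2 : HasDerivAt (fun x : ℝ => 2 * b * x + 2 * b ^ 2 - b) (2 * b) x := by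
        simpa using (((hasDerivAt_id x).const_mul (2 * b)).add_const (2 * b ^ 2)).sub_const b
      have := h1.mul h2
      refine this.congr_deriv ?_
      field_simp
      ring
    have hii : IntervalIntegrable (fun x : ℝ => Real.exp (-x / b) * (1 - 2 * x))
        volume 0 1 := by
      apply Continuous.intervalIntegrable
      exact ((Real.continuous_exp.comp ((continuous_id.neg).div_const b))).mul
        (continuous_const.sub (continuous_const.mul continuous_id))
    rw [intervalIntegral.integral_eq_sub_of_hasDerivAt hderiv hii]
    simp only [neg_zero, zero_div, Real.exp_zero]
    ring_nf
  -- assemble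
  have hsplit : (∫ x : ℝ, f x)
      = (∫ x in Iic (0 : ℝ), f x) + ((∫ x in Ioc (0 : ℝ) 1, f x) + ∫ x in Ioi (1 : ℝ), f x) := by
    rw [← intervalIntegral.integral_Iic_add_Ioi hint_left hint_Ioi]
    congr 1
    rw [← Ioc_union_Ioi_eq_Ioi (zero_le_one : (0 : ℝ) ≤ 1),
      setIntegral_union (Ioc_disjoint_Ioi le_rfl) measurableSet_Ioi hint_mid hint_right]
  rw [hsplit, hleft, hmid, hright]
  field_simp
  ring
end

section
/- For b > 0, the log moment generating function bound μ_{Lap(b)}(λ) = (1/(λ−1))·log[ (λ/(2λ−1))·exp((λ−1)/b) + ((λ−1)/(2λ−1))·exp(−λ/b) ] satisfies μ_{Lap(b)}(λ) ≤ 1/b for all λ > 1, and μ_{Lap(b)}(λ) → 1/b as λ → ∞. -/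
/-- The log moment bound
`μ_{Lap(b)}(λ) = (1/(λ−1))·log[(λ/(2λ−1))·e^{(λ−1)/b} + ((λ−1)/(2λ−1))·e^{−λ/b}]`
is at most `1/b` for all `λ > 1`, and tends to `1/b` as `λ → ∞`. -/
theorem laplace_log_moment_bound (b : ℝ) (hb : 0 < b) :
    (∀ lam : ℝ, 1 < lam →
      (1 / (lam - 1)) * Real.log
          ((lam / (2 * lam - 1)) * Real.exp ((lam - 1) / b) +
            ((lam - 1) / (2 * lam - 1)) * Real.exp (-lam / b)) ≤ 1 / b) ∧
    Filter.Tendsto (fun lam : ℝ =>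
        (1 / (lam - 1)) * Real.log
          ((lam / (2 * lam - 1)) * Real.exp ((lam - 1) / b) +
            ((lam - 1) / (2 * lam - 1)) * Real.exp (-lam / b)))
      Filter.atTop (nhds (1 / b)) := by
  have key : ∀ lam : ℝ, 1 < lam →
      1 / b - Real.log 2 * (1 / (lam - 1)) ≤
        (1 / (lam - 1)) * Real.log
          ((lam / (2 * lam - 1)) * Real.exp ((lam - 1) / b) +
            ((lam - 1) / (2 * lam - 1)) * Real.exp (-lam / b)) ∧
      (1 / (lam - 1)) * Real.log
          ((lam / (2 * lam - 1)) * Real.exp ((lam - 1) / b) +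
            ((lam - 1) / (2 * lam - 1)) * Real.exp (-lam / b)) ≤ 1 / b := by
    intro lam hlam
    have h1 : (0:ℝ) < lam - 1 := by linarith
    have h2 : (0:ℝ) < 2 * lam - 1 := by linarith
    set x : ℝ := (lam - 1) / b with hx
    set S : ℝ := (lam / (2 * lam - 1)) * Real.exp ((lam - 1) / b) +
            ((lam - 1) / (2 * lam - 1)) * Real.exp (-lam / b) with hS
    have hexp : Real.exp (-lam / b) ≤ Real.exp x := by
      apply Real.exp_le_exp.mpr
      rw [div_le_div_iff₀ hb hb]
      nlinarith
    have hApos : (0:ℝ) < lam / (2 * lam - 1) := by positivity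
    have hBpos : (0:ℝ) ≤ (lam - 1) / (2 * lam - 1) := by positivity
    have hAB : lam / (2 * lam - 1) + (lam - 1) / (2 * lam - 1) = 1 := by
      rw [← add_div, div_eq_one_iff_eq h2.ne']; ring
    have hAhalf : (1:ℝ)/2 ≤ lam / (2 * lam - 1) := by
      rw [div_le_div_iff₀ (by norm_num) h2]; linarith
    have hexpos : (0:ℝ) < Real.exp x := Real.exp_pos _
    have hSle : S ≤ Real.exp x := by
      have : ((lam - 1) / (2 * lam - 1)) * Real.exp (-lam / b) ≤
          ((lam - 1) / (2 * lam - 1)) * Real.exp x :=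
        mul_le_mul_of_nonneg_left hexp hBpos
      calc S ≤ (lam / (2 * lam - 1)) * Real.exp x +
              ((lam - 1) / (2 * lam - 1)) * Real.exp x := by
            rw [hS]; exact add_le_add le_rfl this
        _ = Real.exp x := by rw [← add_mul, hAB, one_mul]
    have hSge : Real.exp x / 2 ≤ S := by
      have h3 : (0:ℝ) ≤ ((lam - 1) / (2 * lam - 1)) * Real.exp (-lam / b) := by positivity
      nlinarith [mul_le_mul_of_nonneg_right hAhalf hexpos.le]
    have hSpos : 0 < S := lt_of_lt_of_le (by positivity) hSge
    have hinv : (0:ℝ) < 1 / (lam - 1) := by positivity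
    have hxb : (1 / (lam - 1)) * x = 1 / b := by
      rw [hx]; field_simp
    constructor
    · have hlog : Real.log (Real.exp x / 2) ≤ Real.log S :=
        Real.log_le_log (by positivity) hSge
      rw [Real.log_div (Real.exp_ne_zero _) two_ne_zero, Real.log_exp] at hlog
      have := mul_le_mul_of_nonneg_left hlog hinv.le
      rw [mul_sub, hxb] at this
      linarith [this]
    · have hlog : Real.log S ≤ x := by
        calc Real.log S ≤ Real.log (Real.exp x) := Real.log_le_log hSpos hSle
          _ = x := Real.log_exp x
      have := mul_le_mul_of_nonneg_left hlog hinv.le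
      rw [hxb] at this
      exact this
  refine ⟨fun lam hlam => (key lam hlam).2, ?_⟩
  have hinv0 : Filter.Tendsto (fun lam : ℝ => 1 / (lam - 1)) Filter.atTop (nhds 0) := by
    simp only [one_div]
    exact tendsto_inv_atTop_zero.comp (Filter.tendsto_atTop_add_const_right _ (-1) Filter.tendsto_id)
  have htend : Filter.Tendsto (fun lam : ℝ => 1 / b - Real.log 2 * (1 / (lam - 1)))
      Filter.atTop (nhds (1 / b)) := by
    have := Filter.Tendsto.const_sub (1 / b) (hinv0.const_mul (Real.log 2))
    simpa using this
  refine tendsto_of_tendsto_of_tendsto_of_le_of_le' htend tendsto_const_nhds ?_ ?_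
  · filter_upwards [Filter.eventually_gt_atTop 1] with lam hlam
    exact (key lam hlam).1
  · filter_upwards [Filter.eventually_gt_atTop 1] with lam hlam
    exact (key lam hlam).2
end

section
/- Let x₁,…,x_L and x'₁,…,x'_L be real vectors satisfying monotonicity (x_j ≥ x'_j for all j) and the Lipschitz property (x'_j + 1 ≥ x_j for all j). Add i.i.d. Laplace(k/ε) noise η_j to each coordinate and output the set of indices of the k largest noisy values. Then for any set S of k indices, the probability of outputting S under inputs (x_j) is at most exp(ε) times the probability of outputting S under inputs (x'_j), and vice versa. -/
open MeasureTheory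

open scoped ENNReal

private theorem my_lintegral_pi_prod : ∀ (n : ℕ) (μ : Measure ℝ), SigmaFinite μ → ∀ (g : Fin n → ℝ → ℝ≥0∞), (∀ j, Measurable (g j)) →
    ∫⁻ ω, ∏ j, g j (ω j) ∂(Measure.pi fun _ : Fin n => μ) = ∏ j, ∫⁻ z, g j z ∂μ := by
  intro n
  induction n with
  | zero =>
    intro μ hμ g hg
    simp [lintegral_const, Measure.pi_univ]
  | succ n ih =>
    intro μ hμ g hg
    have hmp := measurePreserving_piFinSuccAbove (fun _ : Fin (n+1) => μ) 0
    set e := MeasurableEquiv.piFinSuccAbove (fun _ : Fin (n+1) => ℝ) 0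
    have hF : Measurable fun p : ℝ × (Fin n → ℝ) => g 0 p.1 * ∏ j, g (Fin.succAbove 0 j) (p.2 j) := by
      apply Measurable.mul ((hg 0).comp measurable_fst)
      exact Finset.measurable_prod _ fun j _ => (hg _).comp ((measurable_pi_apply j).comp measurable_snd)
    calc ∫⁻ ω, ∏ j, g j (ω j) ∂(Measure.pi fun _ : Fin (n+1) => μ)
        = ∫⁻ ω, (fun p : ℝ × (Fin n → ℝ) => g 0 p.1 * ∏ j, g (Fin.succAbove 0 j) (p.2 j)) (e ω)
            ∂(Measure.pi fun _ : Fin (n+1) => μ) := by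
          congr 1; funext ω
          simp only [e, MeasurableEquiv.piFinSuccAbove]
          rw [Fin.prod_univ_succAbove (fun j => g j (ω j)) 0]
          rfl
      _ = ∫⁻ p, g 0 p.1 * ∏ j, g (Fin.succAbove 0 j) (p.2 j) ∂(μ.prod (Measure.pi fun _ : Fin n => μ)) := by
          exact hmp.lintegral_comp hF
      _ = (∫⁻ z, g 0 z ∂μ) * ∫⁻ y, ∏ j, g (Fin.succAbove 0 j) (y j) ∂(Measure.pi fun _ : Fin n => μ) := by
          exact lintegral_prod_mul (hg 0).aemeasurable
            (Finset.measurable_prod _ fun j _ => (hg _).comp (measurable_pi_apply j)).aemeasurable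
      _ = ∏ j, ∫⁻ z, g j z ∂μ := by
          rw [ih μ hμ _ (fun j => hg _), Fin.prod_univ_succAbove (fun j => ∫⁻ z, g j z ∂μ) 0]

private theorem my_pi_withDensity (n : ℕ) (g : Fin n → ℝ → ℝ) (hg : ∀ j, Measurable (g j)) :
    (Measure.pi fun j : Fin n => volume.withDensity fun z => ENNReal.ofReal (g j z)) =
      (Measure.pi fun _ : Fin n => (volume : Measure ℝ)).withDensity
        fun ω => ∏ j, ENNReal.ofReal (g j (ω j)) := by
  have hgm : ∀ j, Measurable fun z => ENNReal.ofReal (g j z) :=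
    fun j => ENNReal.measurable_ofReal.comp (hg j)
  refine Measure.pi_eq fun s hs => ?_
  rw [withDensity_apply _ (MeasurableSet.univ_pi hs)]
  have key : ∫⁻ ω in Set.pi Set.univ s, ∏ j, ENNReal.ofReal (g j (ω j))
      ∂(Measure.pi fun _ : Fin n => (volume : Measure ℝ))
      = ∫⁻ ω, ∏ j, (s j).indicator (fun z => ENNReal.ofReal (g j z)) (ω j)
      ∂(Measure.pi fun _ : Fin n => (volume : Measure ℝ)) := by
    rw [← lintegral_indicator (MeasurableSet.univ_pi hs)]
    congr 1; funext ω
    by_cases hω : ω ∈ Set.pi Set.univ s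
    · rw [Set.indicator_of_mem hω]
      exact Finset.prod_congr rfl fun j _ =>
        (Set.indicator_of_mem (hω j (Set.mem_univ j)) (fun z => ENNReal.ofReal (g j z))).symm
    · rw [Set.indicator_of_notMem hω]
      have : ∃ j, ω j ∉ s j := by
        by_contra h
        push_neg at h
        exact hω fun j _ => h j
      obtain ⟨j, hj⟩ := this
      exact (Finset.prod_eq_zero (Finset.mem_univ j)
        (Set.indicator_of_notMem hj (fun z => ENNReal.ofReal (g j z)))).symm
  rw [key, my_lintegral_pi_prod n volume inferInstance _
    (fun j => (hgm j).indicator (hs j))]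
  exact Finset.prod_congr rfl fun j _ => by
    rw [lintegral_indicator (hs j), withDensity_apply _ (hs j)]

private theorem my_map_add_withDensity (n : ℕ) (F : (Fin n → ℝ) → ℝ≥0∞) (hF : Measurable F)
    (c : Fin n → ℝ) :
    Measure.map (fun ω => ω + c) ((Measure.pi fun _ : Fin n => (volume : Measure ℝ)).withDensity F)
      = (Measure.pi fun _ : Fin n => (volume : Measure ℝ)).withDensity fun ω => F (ω - c) := by
  have hadd : Measurable fun ω : Fin n → ℝ => ω + c := measurable_add_const c
  ext s hs
  rw [Measure.map_apply hadd hs, withDensity_apply _ (hadd hs), withDensity_apply _ hs]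
  have key : ∀ ω : Fin n → ℝ, Set.indicator ((fun ω => ω + c) ⁻¹' s) F ω
      = Set.indicator s (fun u => F (u - c)) (ω + c) := by
    intro ω
    by_cases hω : ω + c ∈ s
    · rw [Set.indicator_of_mem hω, Set.indicator_of_mem (by exact hω), add_sub_cancel_right]
    · rw [Set.indicator_of_notMem hω, Set.indicator_of_notMem (by exact hω)]
  calc ∫⁻ ω in (fun ω => ω + c) ⁻¹' s, F ω ∂(Measure.pi fun _ : Fin n => (volume : Measure ℝ))
      = ∫⁻ ω, Set.indicator s (fun u => F (u - c)) (ω + c)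
          ∂(Measure.pi fun _ : Fin n => (volume : Measure ℝ)) := by
        rw [← lintegral_indicator (hadd hs) _]
        exact lintegral_congr key
    _ = ∫⁻ ω, Set.indicator s (fun u => F (u - c)) ω
          ∂(Measure.pi fun _ : Fin n => (volume : Measure ℝ)) :=
        lintegral_add_right_eq_self _ c
    _ = ∫⁻ ω in s, F (ω - c) ∂(Measure.pi fun _ : Fin n => (volume : Measure ℝ)) :=
        lintegral_indicator hs _

private theorem my_shift_bound (n : ℕ) (b : ℝ) (hb : 0 < b) (c : Fin n → ℝ) (A B : Set (Fin n → ℝ))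
    (hAB : ∀ ω ∈ A, ω + c ∈ B) :
    (Measure.pi fun _ : Fin n => laplace b) A ≤
      ENNReal.ofReal (Real.exp ((∑ j, |c j|) / b)) * (Measure.pi fun _ : Fin n => laplace b) B := by
  set f : ℝ → ℝ := fun z => (1 / (2 * b)) * Real.exp (-|z| / b) with hf_def
  have hf : Measurable f := by fun_prop
  have hpi : (Measure.pi fun _ : Fin n => laplace b)
      = (Measure.pi fun _ : Fin n => (volume : Measure ℝ)).withDensity
          fun ω => ∏ j, ENNReal.ofReal (f (ω j)) :=
    my_pi_withDensity n (fun _ => f) (fun _ => hf)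
  set F : (Fin n → ℝ) → ℝ≥0∞ := fun ω => ∏ j, ENNReal.ofReal (f (ω j)) with hF_def
  have hFm : Measurable F :=
    Finset.measurable_prod _ fun j _ =>
      ENNReal.measurable_ofReal.comp (hf.comp (measurable_pi_apply j))
  set K : ℝ≥0∞ := ENNReal.ofReal (Real.exp ((∑ j, |c j|) / b)) with hK_def
  -- pointwise density bound
  have hpoint : ∀ ω : Fin n → ℝ, F (ω - c) ≤ K * F ω := by
    intro ω
    have h1 : ∀ j, ENNReal.ofReal (f (ω j - c j))
        ≤ ENNReal.ofReal (Real.exp (|c j| / b)) * ENNReal.ofReal (f (ω j)) := by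
      intro j
      rw [← ENNReal.ofReal_mul (Real.exp_pos _).le]
      apply ENNReal.ofReal_le_ofReal
      have habs : -|ω j - c j| / b ≤ |c j| / b + (-|ω j| / b) := by
        rw [← add_div, div_le_div_iff_of_pos_right hb]
        have := abs_sub_abs_le_abs_sub (ω j) (ω j - c j)
        have h2 : ω j - (ω j - c j) = c j := by ring
        rw [h2] at this
        linarith [abs_nonneg (c j)]
      calc f (ω j - c j) = (1 / (2 * b)) * Real.exp (-|ω j - c j| / b) := rfl
        _ ≤ (1 / (2 * b)) * Real.exp (|c j| / b + (-|ω j| / b)) := by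
            apply mul_le_mul_of_nonneg_left (Real.exp_le_exp.mpr habs) (by positivity)
        _ = Real.exp (|c j| / b) * f (ω j) := by
            rw [Real.exp_add]; simp only [hf_def]; ring
    calc F (ω - c) = ∏ j, ENNReal.ofReal (f (ω j - c j)) := by
          simp only [hF_def, Pi.sub_apply]
      _ ≤ ∏ j, (ENNReal.ofReal (Real.exp (|c j| / b)) * ENNReal.ofReal (f (ω j))) :=
          Finset.prod_le_prod' fun j _ => h1 j
      _ = (∏ j, ENNReal.ofReal (Real.exp (|c j| / b))) * F ω := Finset.prod_mul_distrib
      _ = K * F ω := by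
          congr 1
          rw [← ENNReal.ofReal_prod_of_nonneg (fun j _ => (Real.exp_pos _).le),
            ← Real.exp_sum]
          congr 2
          rw [Finset.sum_div]
  calc (Measure.pi fun _ : Fin n => laplace b) A
      ≤ (Measure.pi fun _ : Fin n => laplace b) ((fun ω => ω + c) ⁻¹' B) :=
        measure_mono hAB
    _ ≤ (Measure.map (fun ω => ω + c) (Measure.pi fun _ : Fin n => laplace b)) B :=
        Measure.le_map_apply (measurable_add_const c).aemeasurable B
    _ = ((Measure.pi fun _ : Fin n => (volume : Measure ℝ)).withDensity fun ω => F (ω - c)) B := by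
        rw [hpi, my_map_add_withDensity n F hFm c]
    _ = ∫⁻ ω in B, F (ω - c) ∂(Measure.pi fun _ : Fin n => (volume : Measure ℝ)) :=
        withDensity_apply' _ B
    _ ≤ ∫⁻ ω in B, K * F ω ∂(Measure.pi fun _ : Fin n => (volume : Measure ℝ)) :=
        lintegral_mono fun ω => hpoint ω
    _ = K * ∫⁻ ω in B, F ω ∂(Measure.pi fun _ : Fin n => (volume : Measure ℝ)) :=
        lintegral_const_mul' K _ ENNReal.ofReal_ne_top
    _ = K * (Measure.pi fun _ : Fin n => laplace b) B := by
        rw [hpi, withDensity_apply' _ B]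

/-- Privacy of noisy top-k selection: for vectors `x, x'` satisfying
monotonicity (`x' ≤ x`) and the Lipschitz property (`x ≤ x' + 1`), addingi.i.d.
`Laplace(k/ε)` noise and outputting the k indices with the largest noisy values
changes the probability of any fixed k-subset by a factor of at most `e^ε`
in either direction. -/
theorem noisy_topk_privacy (L k : ℕ) (hk : 1 ≤ k) (hkL : k ≤ L)
    (ε : ℝ) (hε : 0 < ε) (x x' : Fin L → ℝ)
    (hmono : ∀ j, x' j ≤ x j) (hlip : ∀ j, x j ≤ x' j + 1)
    (sel : (Fin L → ℝ) → Finset (Fin L))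
    (hselcard : ∀ y, (sel y).card = k)
    (hseltop : ∀ y, ∀ i ∈ sel y, ∀ j, j ∉ sel y → y j ≤ y i)
    (S : Finset (Fin L)) (hS : S.card = k) :
    (Measure.pi fun _ : Fin L => laplace ((k : ℝ) / ε))
        {ω | sel (fun j => x j + ω j) = S} ≤
      ENNReal.ofReal (Real.exp ε) *
        (Measure.pi fun _ : Fin L => laplace ((k : ℝ) / ε))
          {ω | sel (fun j => x' j + ω j) = S} ∧
    (Measure.pi fun _ : Fin L => laplace ((k : ℝ) / ε))
        {ω | sel (fun j => x' j + ω j) = S} ≤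
      ENNReal.ofReal (Real.exp ε) *
        (Measure.pi fun _ : Fin L => laplace ((k : ℝ) / ε))
          {ω | sel (fun j => x j + ω j) = S} := by
  have hk0 : (0 : ℝ) < k := by exact_mod_cast Nat.lt_of_lt_of_le Nat.zero_lt_one hk
  set b : ℝ := (k : ℝ) / ε with hb_def
  have hb : 0 < b := div_pos hk0 hε
  set μ : Measure (Fin L → ℝ) := Measure.pi fun _ : Fin L => laplace b with hμ_def
  set A : Set (Fin L → ℝ) := {ω | sel (fun j => x j + ω j) = S} with hA_def
  set A' : Set (Fin L → ℝ) := {ω | sel (fun j => x' j + ω j) = S} with hA'_def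
  -- selection stability under strict domination
  have sel_eq : ∀ z : Fin L → ℝ, (∀ i ∈ S, ∀ j, j ∉ S → z j < z i) → sel z = S := by
    intro z h
    by_contra hne
    have hcard : (sel z).card = S.card := by rw [hselcard, hS]
    have h1 : ¬S ⊆ sel z := fun hsub =>
      hne (Finset.eq_of_subset_of_card_le hsub hcard.le).symm
    obtain ⟨i, hiS, hiz⟩ := Finset.not_subset.mp h1
    have h2 : ¬sel z ⊆ S := fun hsub =>
      hne (Finset.eq_of_subset_of_card_le hsub hcard.ge)
    obtain ⟨j, hjz, hjS⟩ := Finset.not_subset.mp h2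
    exact absurd (hseltop z j hjz i hiz) (not_le.mpr (h i hiS j hjS))
  -- generic: sum of the shift vectors
  have sum_bound : ∀ a : Fin L → ℝ, (∀ j ∈ S, 0 ≤ a j ∧ a j ≤ 1) → ∀ δ : ℝ, 0 < δ →
      (∑ j, |if j ∈ S then a j + δ else 0|) / b ≤ ε * (1 + δ) := by
    intro a ha δ hδ
    have hsum : (∑ j, |if j ∈ S then a j + δ else 0|) ≤ (k : ℝ) * (1 + δ) := by
      have : ∀ j, |if j ∈ S then a j + δ else 0| ≤ if j ∈ S then 1 + δ else 0 := by
        intro j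
        by_cases hj : j ∈ S
        · simp only [if_pos hj]
          rw [abs_of_nonneg (by linarith [(ha j hj).1])]
          linarith [(ha j hj).2]
        · simp [if_neg hj]
      calc (∑ j, |if j ∈ S then a j + δ else 0|) ≤ ∑ j, if j ∈ S then (1 + δ) else 0 :=
            Finset.sum_le_sum fun j _ => this j
        _ = (k : ℝ) * (1 + δ) := by
            rw [Finset.sum_ite_mem, Finset.univ_inter, Finset.sum_const, hS, nsmul_eq_mul]
    rw [div_le_iff₀ hb]
    calc (∑ j, |if j ∈ S then a j + δ else 0|) ≤ (k : ℝ) * (1 + δ) := hsum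
      _ = ε * (1 + δ) * b := by rw [hb_def]; field_simp
  -- the limiting argument
  have lim : ∀ m1 m2 : ℝ≥0∞,
      (∀ δ : ℝ, 0 < δ → m1 ≤ ENNReal.ofReal (Real.exp (ε * (1 + δ))) * m2) →
      m1 ≤ ENNReal.ofReal (Real.exp ε) * m2 := by
    intro m1 m2 h
    rcases eq_or_ne m2 ⊤ with h2 | h2
    · rw [h2, ENNReal.mul_top (ENNReal.ofReal_pos.mpr (Real.exp_pos ε)).ne']
      exact le_top
    · have ht : Filter.Tendsto (fun δ : ℝ => ENNReal.ofReal (Real.exp (ε * (1 + δ))) * m2)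
          (nhdsWithin 0 (Set.Ioi 0)) (nhds (ENNReal.ofReal (Real.exp ε) * m2)) := by
        have hc : Continuous fun δ : ℝ => ENNReal.ofReal (Real.exp (ε * (1 + δ))) := by
          exact ENNReal.continuous_ofReal.comp (Real.continuous_exp.comp (by continuity))
        have h1 := (hc.tendsto 0).mono_left (nhdsWithin_le_nhds (s := Set.Ioi (0:ℝ)))
        simp only [add_zero, mul_one] at h1
        exact ENNReal.Tendsto.mul_const h1 (Or.inr h2)
      exact ge_of_tendsto ht (eventually_nhdsWithin_of_forall fun δ hδ => h δ hδ)
  constructor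
  · refine lim _ _ fun δ hδ => ?_
    set c : Fin L → ℝ := fun j => if j ∈ S then (x j - x' j) + δ else 0 with hc_def
    have hAB : ∀ ω ∈ A, ω + c ∈ A' := by
      intro ω hω
      have hy : sel (fun j => x j + ω j) = S := hω
      refine sel_eq _ fun i hi j hj => ?_
      have h1 : x j + ω j ≤ x i + ω i := by
        rw [← hy] at hi hj
        exact hseltop _ i hi j hj
      simp only [Pi.add_apply, hc_def, if_pos hi, if_neg hj]
      have := hmono i
      have := hmono j
      linarith
    calc μ A ≤ ENNReal.ofReal (Real.exp ((∑ j, |c j|) / b)) * μ A' :=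
          my_shift_bound L b hb c A A' hAB
      _ ≤ ENNReal.ofReal (Real.exp (ε * (1 + δ))) * μ A' := by
          refine mul_le_mul_left (ENNReal.ofReal_le_ofReal (Real.exp_le_exp.mpr ?_)) _
          exact sum_bound (fun j => x j - x' j)
            (fun j _ => ⟨by show (0:ℝ) ≤ x j - x' j; linarith [hmono j],
              by show x j - x' j ≤ 1; linarith [hlip j]⟩) δ hδ
  · refine lim _ _ fun δ hδ => ?_
    set c : Fin L → ℝ := fun j => if j ∈ S then 1 + δ else 0 with hc_def
    have hAB : ∀ ω ∈ A', ω + c ∈ A := by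
      intro ω hω
      have hy : sel (fun j => x' j + ω j) = S := hω
      refine sel_eq _ fun i hi j hj => ?_
      have h1 : x' j + ω j ≤ x' i + ω i := by
        rw [← hy] at hi hj
        exact hseltop _ i hi j hj
      simp only [Pi.add_apply, hc_def, if_pos hi, if_neg hj]
      have := hmono i
      have := hlip j
      linarith
    calc μ A' ≤ ENNReal.ofReal (Real.exp ((∑ j, |c j|) / b)) * μ A :=
          my_shift_bound L b hb c A' A hAB
      _ ≤ ENNReal.ofReal (Real.exp (ε * (1 + δ))) * μ A := by
          refine mul_le_mul_left (ENNReal.ofReal_le_ofReal (Real.exp_le_exp.mpr ?_)) _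
          have : c = fun j => if j ∈ S then (fun _ => (1:ℝ)) j + δ else 0 := rfl
          rw [this] at *
          exact sum_bound (fun _ => 1) (fun j _ => ⟨zero_le_one, le_refl 1⟩) δ hδ
end
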